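/- Let Q be an N×n_L real matrix (N ≥ n_L) with singular value decomposition Q = U Σ Vᵀ, where U is an N×N orthogonal matrix, V is an n_L×n_L orthogonal matrix, and Σ is the N×n_L matrix whose top n_L×n_L block is an invertible diagonal matrix Σ_D and whose remaining rows are zero. Let J be an n_L×N real matrix, define J̃ := Vᵀ J U, and write J̃ = [J̃₁ J̃₂] in block form with J̃₁ of size n_L×n_L. If J̃₁ is invertible, then JQ is invertible and Q (JQ)⁻¹ = U · [J̃₁⁻¹ ; 0] · Vᵀ, where [J̃₁⁻¹ ; 0] is the N×n_L matrix with top block J̃₁⁻¹ and zero below. (Lemma S6: the dynamical inversion Q(JQ)⁻¹ is a generalized inverse of J constrained by the column space of Q.) -/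

import Mathlib

open Matrix

/-- Lemma S6: if `Q = U Σ Vᵀ` is a singular value decomposition of `Q` (with
`Σ = [Σ_D ; 0]`, `Σ_D` invertible diagonal), `J̃ = Vᵀ J U = [J̃₁ J̃₂]` and `J̃₁`
is invertible, then `JQ` is invertible and `Q (JQ)⁻¹ = U [J̃₁⁻¹ ; 0] Vᵀ`, a
generalized inverse of `J` constrained by the column space of `Q`. -/
theorem dynamical_inversion_generalized_inverse {nL k : ℕ}
    (U : Matrix (Fin nL ⊕ Fin k) (Fin nL ⊕ Fin k) ℝ)
    (V : Matrix (Fin nL) (Fin nL) ℝ)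
    (hU : Uᵀ * U = 1) (hV : Vᵀ * V = 1)
    (d : Fin nL → ℝ) (hd : ∀ i, d i ≠ 0)
    (Q : Matrix (Fin nL ⊕ Fin k) (Fin nL) ℝ)
    (hQ : Q = U * Matrix.fromRows (Matrix.diagonal d) (0 : Matrix (Fin k) (Fin nL) ℝ) * Vᵀ)
    (J : Matrix (Fin nL) (Fin nL ⊕ Fin k) ℝ)
    (hJ1 : IsUnit ((Vᵀ * J * U).toCols₁)) :
    IsUnit (J * Q) ∧
      Q * (J * Q)⁻¹ = U * Matrix.fromRows ((Vᵀ * J * U).toCols₁)⁻¹ (0 : Matrix (Fin k) (Fin nL) ℝ) * Vᵀ := by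
  set A := (Vᵀ * J * U).toCols₁ with hA
  set B := (Vᵀ * J * U).toCols₂ with hB
  have hV' : V * Vᵀ = 1 := mul_eq_one_comm.mp hV
  have hdetV : V.det * Vᵀ.det = 1 := by rw [← Matrix.det_mul, hV', Matrix.det_one]
  have hUnitV : IsUnit V := (Matrix.isUnit_iff_isUnit_det V).mpr (IsUnit.of_mul_eq_one _ hdetV)
  have hUnitVt : IsUnit Vᵀ := (Matrix.isUnit_iff_isUnit_det Vᵀ).mpr
    (IsUnit.of_mul_eq_one _ (by rw [mul_comm] at hdetV; exact hdetV))
  have hUnitD : IsUnit (Matrix.diagonal d) := by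
    rw [Matrix.isUnit_iff_isUnit_det, Matrix.det_diagonal]
    exact (Finset.prod_ne_zero_iff.mpr fun i _ => hd i).isUnit
  have hJU : J * U = V * Matrix.fromCols A B := by
    rw [hA, hB, fromCols_toCols, ← Matrix.mul_assoc, ← Matrix.mul_assoc, hV',
      Matrix.one_mul]
  have hJQ : J * Q = V * (A * Matrix.diagonal d) * Vᵀ := by
    rw [hQ, ← Matrix.mul_assoc, ← Matrix.mul_assoc, hJU, Matrix.mul_assoc V,
      fromCols_mul_fromRows, Matrix.mul_zero, add_zero]
  have hUnitJQ : IsUnit (J * Q) := by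
    rw [hJQ]
    exact (hUnitV.mul (hJ1.mul hUnitD)).mul hUnitVt
  refine ⟨hUnitJQ, ?_⟩
  have hVinv : V⁻¹ = Vᵀ := Matrix.inv_eq_left_inv hV
  have hVtinv : (Vᵀ)⁻¹ = V := Matrix.inv_eq_right_inv hV
  have hDD : Matrix.diagonal d * (Matrix.diagonal d)⁻¹ = 1 :=
    Matrix.mul_nonsing_inv _ ((Matrix.isUnit_iff_isUnit_det _).mp hUnitD)
  have hAA : A * A⁻¹ = 1 := Matrix.mul_nonsing_inv _ ((Matrix.isUnit_iff_isUnit_det _).mp hJ1)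
  have hinv : (J * Q)⁻¹ = V * ((Matrix.diagonal d)⁻¹ * A⁻¹) * Vᵀ := by
    rw [hJQ, Matrix.mul_inv_rev, Matrix.mul_inv_rev, Matrix.mul_inv_rev, hVinv, hVtinv]
    simp only [Matrix.mul_assoc]
  rw [hinv, hQ]
  simp only [Matrix.mul_assoc]
  rw [← Matrix.mul_assoc Vᵀ V, hV, Matrix.one_mul, Matrix.fromRows_mul, Matrix.fromRows_mul,
    Matrix.zero_mul, ← Matrix.mul_assoc (Matrix.diagonal d), hDD, Matrix.one_mul, Matrix.zero_mul]
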